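/- arXiv:2311.03344 — 2 statements merged into one kernel-verified Lean document; each statement's English description precedes it below -/
import Mathlib

section
/- Let d, l ≥ 1 be integers and let M ⊆ P([d]) be non-empty. If A is an order-d lattice subset such that cov_M(A \ E) ≥ d^d·|M|·l, where E is the set of points of [n₁]×⋯×[n_d] that do not have all coordinates pairwise distinct, then there exist pairwise disjoint subsets X₁ ⊆ [n₁], …, X_d ⊆ [n_d] such that cov_M(A ∩ (X₁×⋯×X_d)) ≥ l. -/
open Finset

/-- A `B`-subspace of `[n₁]×⋯×[n_d]`: the set of points agreeing with some point `u`
on all coordinates outside `B`. -/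
def IsBSubspace {d : ℕ} (n : Fin d → ℕ) (B : Finset (Fin d))
    (S : Set (∀ j, Fin (n j))) : Prop :=
  ∃ u : ∀ j, Fin (n j), S = {x | ∀ j ∉ B, x j = u j}

/-- An `M`-subspace: a `B`-subspace for some `B ∈ M`. -/
def IsMSubspace {d : ℕ} (n : Fin d → ℕ) (M : Finset (Finset (Fin d)))
    (S : Set (∀ j, Fin (n j))) : Prop :=
  ∃ B ∈ M, IsBSubspace n B S

/-- The `M`-covering number: the least `k` such that `A` is covered by `k` `M`-subspaces. -/
noncomputable def covM {d : ℕ} (n : Fin d → ℕ) (M : Finset (Finset (Fin d)))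
    (A : Set (∀ j, Fin (n j))) : ℕ :=
  sInf {k | ∃ S : Fin k → Set (∀ j, Fin (n j)),
    (∀ i, IsMSubspace n M (S i)) ∧ A ⊆ ⋃ i, S i}

/-- The `B`-subspace through a point `u`. -/
def SB {d : ℕ} (n : Fin d → ℕ) (B : Finset (Fin d)) (u : ∀ j, Fin (n j)) :
    Set (∀ j, Fin (n j)) :=
  {x | ∀ j ∉ B, x j = u j}

lemma mem_SB_self {d : ℕ} (n : Fin d → ℕ) (B : Finset (Fin d)) (u : ∀ j, Fin (n j)) :
    u ∈ SB n B u := fun _ _ => rfl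

lemma SB_symm {d : ℕ} {n : Fin d → ℕ} {B : Finset (Fin d)} {u x : ∀ j, Fin (n j)}
    (h : x ∈ SB n B u) : u ∈ SB n B x := fun j hj => (h j hj).symm

lemma isMSubspace_SB {d : ℕ} (n : Fin d → ℕ) {M : Finset (Finset (Fin d))}
    {B : Finset (Fin d)} (hB : B ∈ M) (u : ∀ j, Fin (n j)) :
    IsMSubspace n M (SB n B u) := ⟨B, hB, u, rfl⟩

/-- Lower bound on `covM` from an independent set. -/
lemma card_le_covM {d : ℕ} (n : Fin d → ℕ) (M : Finset (Finset (Fin d))) (hM : M.Nonempty)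
    (P : Finset (∀ j, Fin (n j)))
    (hind : ∀ B ∈ M, ∀ p ∈ P, ∀ q ∈ P, q ∈ SB n B p → q = p)
    (Z : Set (∀ j, Fin (n j))) (hPZ : ∀ p ∈ P, p ∈ Z) :
    P.card ≤ covM n M Z := by
  classical
  obtain ⟨B₀, hB₀⟩ := hM
  have hne : {k | ∃ S : Fin k → Set (∀ j, Fin (n j)),
      (∀ i, IsMSubspace n M (S i)) ∧ Z ⊆ ⋃ i, S i}.Nonempty := by
    refine ⟨Fintype.card (∀ j, Fin (n j)),
      fun i => SB n B₀ ((Fintype.equivFin _).symm i),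
      fun i => isMSubspace_SB n hB₀ _, ?_⟩
    intro z _
    refine Set.mem_iUnion.mpr ⟨Fintype.equivFin _ z, ?_⟩
    simpa using mem_SB_self n B₀ z
  refine le_csInf hne ?_
  rintro k ⟨S, hS, hcov⟩
  rcases P.eq_empty_or_nonempty with rfl | ⟨p₀, hp₀⟩
  · simp
  have hZcov : ∀ p ∈ P, ∃ i, p ∈ S i := fun p hp =>
    Set.mem_iUnion.mp (hcov (hPZ p hp))
  have hkne : Nonempty (Fin k) := ⟨(hZcov p₀ hp₀).choose⟩
  set f : (∀ j, Fin (n j)) → Fin k := fun p =>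
    if h : ∃ i, p ∈ S i then h.choose else Classical.arbitrary _ with hf
  have hmem : ∀ p ∈ P, p ∈ S (f p) := by
    intro p hp
    have h := hZcov p hp
    simp only [hf, dif_pos h]
    exact h.choose_spec
  calc P.card ≤ (Finset.univ : Finset (Fin k)).card := by
        refine Finset.card_le_card_of_injOn f (fun _ _ => Finset.mem_univ _) ?_
        intro p hp q hq hfpq
        have hp' : p ∈ P := Finset.mem_coe.mp hp
        have hq' : q ∈ P := Finset.mem_coe.mp hq
        obtain ⟨B, hB, u, hu⟩ := hS (f p)
        have h1 : p ∈ S (f p) := hmem p hp'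
        have h2 : q ∈ S (f p) := hfpq ▸ hmem q hq'
        rw [hu] at h1 h2
        exact (hind B hB p hp' q hq'
          (fun j hj => (h2 j hj).trans (h1 j hj).symm)).symm
    _ = k := by simp

/-- Upper bound on `covM` from a finite family of subspaces. -/
lemma covM_le_card {d : ℕ} (n : Fin d → ℕ) (M : Finset (Finset (Fin d)))
    (A : Set (∀ j, Fin (n j))) (F : Finset (Set (∀ j, Fin (n j))))
    (hF : ∀ S ∈ F, IsMSubspace n M S) (hcov : ∀ a ∈ A, ∃ S ∈ F, a ∈ S) :
    covM n M A ≤ F.card := by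
  classical
  apply Nat.sInf_le
  refine ⟨fun i => (F.equivFin.symm i : Set _), fun i => hF _ (F.equivFin.symm i).2, ?_⟩
  intro a ha
  obtain ⟨S, hS, haS⟩ := hcov a ha
  refine Set.mem_iUnion.mpr ⟨F.equivFin ⟨S, hS⟩, ?_⟩
  simpa using haS

/-- Greedy extraction of an independent set that dominates `Y`. -/
lemma exists_indep {d : ℕ} (n : Fin d → ℕ) (M : Finset (Finset (Fin d))) (hM : M.Nonempty)
    (Y : Finset (∀ j, Fin (n j))) :
    ∃ P : Finset (∀ j, Fin (n j)), P ⊆ Y ∧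
      (∀ B ∈ M, ∀ p ∈ P, ∀ q ∈ P, q ∈ SB n B p → q = p) ∧
      (∀ y ∈ Y, ∃ p ∈ P, ∃ B ∈ M, y ∈ SB n B p) := by
  classical
  induction Y using Finset.strongInduction with
  | _ Y ih =>
    rcases Y.eq_empty_or_nonempty with rfl | ⟨p₀, hp₀⟩
    · exact ⟨∅, by simp, by simp, by simp⟩
    set Y' := Y.filter (fun y => ∀ B ∈ M, y ∉ SB n B p₀) with hY'
    have hss : Y' ⊂ Y := by
      refine Finset.filter_ssubset.mpr ⟨p₀, hp₀, ?_⟩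
      push_neg
      exact ⟨hM.choose, hM.choose_spec, mem_SB_self n _ p₀⟩
    obtain ⟨P', hP'sub, hP'ind, hP'cov⟩ := ih Y' hss
    have hP'Y : P' ⊆ Y := hP'sub.trans (Finset.filter_subset _ _)
    refine ⟨insert p₀ P', Finset.insert_subset hp₀ hP'Y, ?_, ?_⟩
    · intro B hB p hp q hq hqp
      rcases Finset.mem_insert.mp hp with rfl | hp' <;>
        rcases Finset.mem_insert.mp hq with rfl | hq'
      · rfl
      · exact absurd hqp ((Finset.mem_filter.mp (hP'sub hq')).2 B hB)
      · exact absurd (SB_symm hqp) ((Finset.mem_filter.mp (hP'sub hp')).2 B hB)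
      · exact hP'ind B hB p hp' q hq' hqp
    · intro y hy
      by_cases h : ∀ B ∈ M, y ∉ SB n B p₀
      · obtain ⟨p, hp, B, hB, hyB⟩ := hP'cov y (Finset.mem_filter.mpr ⟨hy, h⟩)
        exact ⟨p, Finset.mem_insert_of_mem hp, B, hB, hyB⟩
      · push_neg at h
        obtain ⟨B, hB, hyB⟩ := h
        exact ⟨p₀, Finset.mem_insert_self _ _, B, hB, hyB⟩

/-- At least `d^(N-d)` colorings are "rainbow" for a fixed injective tuple of values. -/
lemma count_good {d N : ℕ} (hdN : d ≤ N) (v : Fin d → Fin N)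
    (hv : Function.Injective v) :
    d ^ (N - d) ≤ (Finset.univ.filter
      (fun c : Fin N → Fin d => ∀ j, c (v j) = j)).card := by
  classical
  set W : Finset (Fin N) := Finset.univ.image v with hW
  have hWcard : W.card = d := by
    rw [hW, Finset.card_image_of_injective _ hv, Finset.card_univ, Fintype.card_fin]
  have hmemW : ∀ x : Fin N, x ∈ W ↔ ∃ j, v j = x := by
    intro x; simp [hW]
  set ι : ((Wᶜ : Finset (Fin N)) → Fin d) → (Fin N → Fin d) := fun g x =>
    if h : ∃ j, v j = x then h.choose
    else g ⟨x, Finset.mem_compl.mpr (fun hx => h ((hmemW x).mp hx))⟩ with hι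
  have hgood : ∀ g, ∀ j, ι g (v j) = j := by
    intro g j
    have h : ∃ j', v j' = v j := ⟨j, rfl⟩
    simp only [hι, dif_pos h]
    exact hv h.choose_spec
  have hinj : Function.Injective ι := by
    intro g₁ g₂ hg
    funext x
    have hx : ¬ ∃ j, v j = (x : Fin N) := fun h =>
      Finset.mem_compl.mp x.2 ((hmemW x).mpr h)
    have := congrFun hg (x : Fin N)
    simp only [hι, dif_neg hx] at this
    simpa using this
  have hcard : Fintype.card ((Wᶜ : Finset (Fin N)) → Fin d) = d ^ (N - d) := by
    rw [Fintype.card_fun, Fintype.card_fin, Fintype.card_coe, Finset.card_compl,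
      hWcard, Fintype.card_fin]
  calc d ^ (N - d) = (Finset.univ : Finset ((Wᶜ : Finset (Fin N)) → Fin d)).card := by
        rw [Finset.card_univ, hcard]
    _ ≤ _ := by
        refine Finset.card_le_card_of_injOn ι ?_ (hinj.injOn)
        intro g _
        exact Finset.mem_filter.mpr ⟨Finset.mem_univ _, hgood g⟩

theorem off_diagonal_covering_number {d l : ℕ} (hd : 0 < d) (hl : 0 < l)
    (n : Fin d → ℕ) (hn : ∀ j, 0 < n j)
    (M : Finset (Finset (Fin d))) (hM : M.Nonempty)
    (A : Set (∀ j, Fin (n j)))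
    (hA : d ^ d * M.card * l ≤
      covM n M (A \ {x | ∃ i j : Fin d, i ≠ j ∧ (x i : ℕ) = (x j : ℕ)})) :
    ∃ X : ∀ j, Set (Fin (n j)),
      (∀ i j : Fin d, i ≠ j → ∀ a ∈ X i, ∀ b ∈ X j, (a : ℕ) ≠ (b : ℕ)) ∧
      l ≤ covM n M (A ∩ {x | ∀ j, x j ∈ X j}) := by
  classical
  set D : Set (∀ j, Fin (n j)) :=
    A \ {x | ∃ i j : Fin d, i ≠ j ∧ (x i : ℕ) = (x j : ℕ)} with hDdef
  obtain ⟨P, hPsub, hPind, hPcov⟩ := exists_indep n M hM D.toFinset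
  -- upper bound: covM D ≤ |P| * |M|
  set F : Finset (Set (∀ j, Fin (n j))) :=
    Finset.image (fun q : (∀ j, Fin (n j)) × Finset (Fin d) => SB n q.2 q.1) (P ×ˢ M)
      with hFdef
  have hub : covM n M D ≤ P.card * M.card := by
    have h1 : covM n M D ≤ F.card := by
      refine covM_le_card n M D F ?_ ?_
      · intro S hS
        obtain ⟨⟨p, B⟩, hq, rfl⟩ := Finset.mem_image.mp hS
        exact isMSubspace_SB n (Finset.mem_product.mp hq).2 _
      · intro a ha
        obtain ⟨p, hp, B, hB, haB⟩ := hPcov a (Set.mem_toFinset.mpr ha)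
        exact ⟨SB n B p, Finset.mem_image.mpr
          ⟨(p, B), Finset.mem_product.mpr ⟨hp, hB⟩, rfl⟩, haB⟩
    calc covM n M D ≤ F.card := h1
      _ ≤ (P ×ˢ M).card := Finset.card_image_le
      _ = P.card * M.card := Finset.card_product _ _
  have hMc : 0 < M.card := Finset.card_pos.mpr hM
  have hm : d ^ d * l ≤ P.card := by
    have h2 : (d ^ d * l) * M.card ≤ P.card * M.card := by
      calc (d ^ d * l) * M.card = d ^ d * M.card * l := by ring
        _ ≤ covM n M D := hA
        _ ≤ P.card * M.card := hub
    exact Nat.le_of_mul_le_mul_right h2 hMc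
  -- colorings
  set N := ∑ j, n j with hNdef
  have hnN : ∀ j, n j ≤ N := fun j =>
    Finset.single_le_sum (fun _ _ => Nat.zero_le _) (Finset.mem_univ j)
  have hdN : d ≤ N := by
    calc d = ∑ _j : Fin d, 1 := by simp
      _ ≤ N := Finset.sum_le_sum (fun j _ => hn j)
  have hvlt : ∀ (p : ∀ j, Fin (n j)) (j : Fin d), (p j : ℕ) < N :=
    fun p j => lt_of_lt_of_le (p j).isLt (hnN j)
  set val : (∀ j, Fin (n j)) → Fin d → Fin N := fun p j => ⟨(p j : ℕ), hvlt p j⟩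
    with hvaldef
  have hPD : ∀ p ∈ P, p ∈ D := fun p hp => Set.mem_toFinset.mp (hPsub hp)
  have hvinj : ∀ p ∈ P, Function.Injective (val p) := by
    intro p hp i j hij
    by_contra hne
    exact (hPD p hp).2 ⟨i, j, hne, congrArg Fin.val hij⟩
  have hcnt : ∀ p ∈ P, d ^ (N - d) ≤ (Finset.univ.filter
      (fun c : Fin N → Fin d => ∀ j, c (val p j) = j)).card :=
    fun p hp => count_good hdN (val p) (hvinj p hp)
  have hsum : l * d ^ N ≤
      ∑ c : Fin N → Fin d, (P.filter (fun p => ∀ j, c (val p j) = j)).card := by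
    have hswap : ∑ c : Fin N → Fin d, (P.filter (fun p => ∀ j, c (val p j) = j)).card
        = ∑ p ∈ P, (Finset.univ.filter
            (fun c : Fin N → Fin d => ∀ j, c (val p j) = j)).card := by
      simp only [Finset.card_filter]
      exact Finset.sum_comm
    rw [hswap]
    calc l * d ^ N = (d ^ d * l) * d ^ (N - d) := by
          rw [mul_comm (d ^ d) l, mul_assoc, ← pow_add, Nat.add_sub_cancel' hdN]
      _ ≤ P.card * d ^ (N - d) := Nat.mul_le_mul_right _ hm
      _ = ∑ _p ∈ P, d ^ (N - d) := by rw [Finset.sum_const, smul_eq_mul]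
      _ ≤ _ := Finset.sum_le_sum hcnt
  obtain ⟨c, hc⟩ : ∃ c : Fin N → Fin d,
      l ≤ (P.filter (fun p => ∀ j, c (val p j) = j)).card := by
    by_contra hcon
    push_neg at hcon
    have hup : ∑ c : Fin N → Fin d, (P.filter (fun p => ∀ j, c (val p j) = j)).card
        ≤ (l - 1) * d ^ N := by
      calc ∑ c : Fin N → Fin d, (P.filter (fun p => ∀ j, c (val p j) = j)).card
          ≤ ∑ _c : Fin N → Fin d, (l - 1) :=
            Finset.sum_le_sum (fun c _ => Nat.le_sub_one_of_lt (hcon c))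
        _ = d ^ N * (l - 1) := by
            rw [Finset.sum_const, smul_eq_mul, Finset.card_univ, Fintype.card_fun,
              Fintype.card_fin, Fintype.card_fin]
        _ = (l - 1) * d ^ N := mul_comm _ _
    have hle : l * d ^ N ≤ (l - 1) * d ^ N := le_trans hsum hup
    have hdN0 : 0 < d ^ N := pow_pos hd N
    have hll : l ≤ l - 1 := Nat.le_of_mul_le_mul_right hle hdN0
    exact absurd hll (Nat.not_le.mpr (Nat.sub_lt hl Nat.one_pos))
  -- build the X's
  refine ⟨fun j => {a | c ⟨(a : ℕ), lt_of_lt_of_le a.isLt (hnN j)⟩ = j}, ?_, ?_⟩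
  · intro i j hij a ha b hb hab
    apply hij
    have h1 : c ⟨(a : ℕ), lt_of_lt_of_le a.isLt (hnN i)⟩ = i := ha
    have h2 : c ⟨(b : ℕ), lt_of_lt_of_le b.isLt (hnN j)⟩ = j := hb
    rw [← h1, ← h2]
    congr 1
    exact Fin.ext hab
  · set P' := P.filter (fun p => ∀ j, c (val p j) = j) with hP'def
    have hind' : ∀ B ∈ M, ∀ p ∈ P', ∀ q ∈ P', q ∈ SB n B p → q = p :=
      fun B hB p hp q hq =>
        hPind B hB p (Finset.mem_filter.mp hp).1 q (Finset.mem_filter.mp hq).1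
    have hsub' : ∀ p ∈ P', p ∈ A ∩ {x | ∀ j, x j ∈
        {a : Fin (n j) | c ⟨(a : ℕ), lt_of_lt_of_le a.isLt (hnN j)⟩ = j}} := by
      intro p hp
      obtain ⟨hpP, hgood⟩ := Finset.mem_filter.mp hp
      exact ⟨(hPD p hpP).1, fun j => hgood j⟩
    exact le_trans hc (card_le_covM n M ⟨_, hM.choose_spec⟩ P' hind' _ hsub')
end

section
/- Let d ≥ 1 and l ≥ 1 be integers, let M ⊆ P([d]) be non-empty, and let A be an order-d lattice subset. Suppose that for every B ∈ M and every non-empty C ⊆ B, the intersection of A with every C-subspace has C*-covering number at most l, where C* = {C \ {j} : j ∈ C}. Then |A| ≤ l^τ · cov_M(A), where τ is the largest size of any B ∈ M. -/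
open Finset

lemma ncard_le_sum_inter {α : Type*} [Fintype α] {k : ℕ} (A : Set α) (S : Fin k → Set α)
    (hA : A ⊆ ⋃ i, S i) : A.ncard ≤ ∑ i, (A ∩ S i).ncard := by
  classical
  have h1 : A.toFinset ⊆ Finset.univ.biUnion (fun i => (A ∩ S i).toFinset) := by
    intro x hx
    simp only [Set.mem_toFinset] at hx
    obtain ⟨i, hi⟩ := Set.mem_iUnion.mp (hA hx)
    exact Finset.mem_biUnion.mpr ⟨i, Finset.mem_univ i, by simp [hx, hi]⟩
  calc A.ncard = A.toFinset.card := (Set.ncard_eq_toFinset_card' A)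
    _ ≤ (Finset.univ.biUnion (fun i => (A ∩ S i).toFinset)).card := Finset.card_le_card h1
    _ ≤ ∑ i, (A ∩ S i).toFinset.card := Finset.card_biUnion_le
    _ = ∑ i, (A ∩ S i).ncard := by simp [Set.ncard_eq_toFinset_card']

lemma exists_cover {d : ℕ} (n : Fin d → ℕ) (M : Finset (Finset (Fin d))) (hM : M.Nonempty)
    (A : Set (∀ j, Fin (n j))) :
    {k | ∃ S : Fin k → Set (∀ j, Fin (n j)),
      (∀ i, IsMSubspace n M (S i)) ∧ A ⊆ ⋃ i, S i}.Nonempty := by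
  classical
  obtain ⟨B, hB⟩ := hM
  refine ⟨Fintype.card (∀ j, Fin (n j)),
    fun i => {x | ∀ j ∉ B, x j = (Fintype.equivFin _).symm i j}, ?_, ?_⟩
  · exact fun i => ⟨B, hB, (Fintype.equivFin _).symm i, rfl⟩
  · intro x _
    refine Set.mem_iUnion.mpr ⟨Fintype.equivFin _ x, ?_⟩
    intro j _
    simp

theorem bounded_size_from_no_significant_subspace {d l : ℕ} (hd : 0 < d) (hl : 0 < l)
    (n : Fin d → ℕ) (hn : ∀ j, 0 < n j)
    (M : Finset (Finset (Fin d))) (hM : M.Nonempty)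
    (A : Set (∀ j, Fin (n j)))
    (h : ∀ B ∈ M, ∀ C ⊆ B, C.Nonempty → ∀ S, IsBSubspace n C S →
      covM n (C.image fun j => C.erase j) (A ∩ S) ≤ l) :
    A.ncard ≤ l ^ (M.sup Finset.card) * covM n M A := by
  classical
  have key : ∀ c : ℕ, ∀ B ∈ M, ∀ C ⊆ B, C.card = c → ∀ S, IsBSubspace n C S →
      (A ∩ S).ncard ≤ l ^ c := by
    intro c
    induction c with
    | zero =>
      intro B hB C hCB hC S hS
      obtain ⟨u, rfl⟩ := hS
      have hC0 : C = ∅ := Finset.card_eq_zero.mp hC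
      subst hC0
      have hsingle : {x : ∀ j, Fin (n j) | ∀ j ∉ (∅ : Finset (Fin d)), x j = u j} = {u} := by
        ext x
        simp [funext_iff]
      rw [hsingle, pow_zero]
      calc (A ∩ {u}).ncard ≤ ({u} : Set (∀ j, Fin (n j))).ncard :=
            Set.ncard_le_ncard Set.inter_subset_right (Set.finite_singleton u)
        _ = 1 := Set.ncard_singleton u
    | succ c ih =>
      intro B hB C hCB hC S hS
      have hCne : C.Nonempty := Finset.card_pos.mp (by omega)
      have hcov := h B hB C hCB hCne S hS
      set M' := C.image (fun j => C.erase j) with hM'def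
      have hM'ne : M'.Nonempty := hCne.image _
      have hne := exists_cover n M' hM'ne (A ∩ S)
      have hmem := Nat.sInf_mem hne
      obtain ⟨T, hT, hcovT⟩ := hmem
      have hk : covM n M' (A ∩ S) ≤ l := hcov
      calc (A ∩ S).ncard ≤ ∑ i, ((A ∩ S) ∩ T i).ncard := ncard_le_sum_inter _ _ hcovT
        _ ≤ ∑ _i : Fin (sInf {k | ∃ S' : Fin k → Set (∀ j, Fin (n j)),
              (∀ i, IsMSubspace n M' (S' i)) ∧ A ∩ S ⊆ ⋃ i, S' i}), l ^ c := by
            refine Finset.sum_le_sum fun i _ => ?_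
            obtain ⟨B', hB', hBsub⟩ := hT i
            obtain ⟨j, hj, rfl⟩ := Finset.mem_image.mp hB'
            have h1 : ((A ∩ S) ∩ T i).ncard ≤ (A ∩ T i).ncard :=
              Set.ncard_le_ncard (fun x hx => ⟨hx.1.1, hx.2⟩) (Set.toFinite _)
            refine h1.trans (ih B hB (C.erase j) ((Finset.erase_subset j C).trans hCB) ?_
              (T i) hBsub)
            rw [Finset.card_erase_of_mem hj, hC]
            omega
        _ = covM n M' (A ∩ S) * l ^ c := by
            rw [Finset.sum_const, Finset.card_univ, Fintype.card_fin, smul_eq_mul]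
            rfl
        _ ≤ l * l ^ c := Nat.mul_le_mul_right _ hk
        _ = l ^ (c + 1) := (pow_succ' l c).symm
  -- main argument
  have hne := exists_cover n M hM A
  have hmem := Nat.sInf_mem hne
  obtain ⟨S, hS, hcovS⟩ := hmem
  calc A.ncard ≤ ∑ i, (A ∩ S i).ncard := ncard_le_sum_inter _ _ hcovS
    _ ≤ ∑ _i : Fin (sInf {k | ∃ S' : Fin k → Set (∀ j, Fin (n j)),
          (∀ i, IsMSubspace n M (S' i)) ∧ A ⊆ ⋃ i, S' i}), l ^ (M.sup Finset.card) := by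
        refine Finset.sum_le_sum fun i _ => ?_
        obtain ⟨B, hB, hBsub⟩ := hS i
        exact (key B.card B hB B le_rfl rfl (S i) hBsub).trans
          (Nat.pow_le_pow_right hl (Finset.le_sup hB))
    _ = l ^ (M.sup Finset.card) * covM n M A := by
        rw [Finset.sum_const, Finset.card_univ, Fintype.card_fin, smul_eq_mul, mul_comm]
        rfl
end
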